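/- arXiv:2005.01378 — 3 statements merged into one kernel-verified Lean document; each statement's English description precedes it below -/
import Mathlib

section
/- There is a universal constant ε₀ > 0 such that the following holds. Let 0 < ε ≤ ε₀ with εN an integer, and let constants satisfy c₁ ≥ 1, c₂ ≥ 1, c₃ ≥ 5c₁, and c₄ ≥ max(100, 6c₃, 50c₁). Assume the concentration condition with constant c₁ and the stability implication with constants c₂, c₄. Then every first-order stationary point w ∈ Δ_{N,2ε} of f — that is, every w ∈ Δ_{N,2ε} for which there exists a unit vector u with uᵀΣ_w u = ‖Σ_w‖₂ and (∇_w F(w,u))ᵀ(w̃ − w) ≥ 0 for all w̃ ∈ Δ_{N,2ε} — satisfies ‖μ_w − μ*‖₂ < c₂ ε √(ln(1/ε)). -/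
open Matrix Finset RealInnerProductSpace

/-- Euclidean (ℓ²) norm of a vector in `Fin n → ℝ`. -/
noncomputable def vnorm {n : ℕ} (v : Fin n → ℝ) : ℝ := Real.sqrt (∑ i, v i ^ 2)

/-- Spectral norm (ℓ²-operator norm) of a matrix. -/
noncomputable def specNorm {m n : ℕ} (A : Matrix (Fin m) (Fin n) ℝ) : ℝ :=
  ‖LinearMap.toContinuousLinearMap (Matrix.toEuclideanLin A)‖

/-- Largest eigenvalue of a symmetric matrix, as the supremum of the Rayleigh quotient
over the unit sphere. -/
noncomputable def lambdaMax {n : ℕ} (A : Matrix (Fin n) (Fin n) ℝ) : ℝ :=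
  sSup {r | ∃ v : Fin n → ℝ, vnorm v = 1 ∧ r = v ⬝ᵥ A.mulVec v}

/-- Weighted empirical mean `μ_w = X w`. -/
noncomputable def muW {d N : ℕ} (X : Matrix (Fin d) (Fin N) ℝ) (w : Fin N → ℝ) : Fin d → ℝ :=
  X.mulVec w

/-- Weighted empirical covariance `Σ_w = ∑ i, w_i (X_i - μ_w)(X_i - μ_w)ᵀ`. -/
noncomputable def covW {d N : ℕ} (X : Matrix (Fin d) (Fin N) ℝ) (w : Fin N → ℝ) :
    Matrix (Fin d) (Fin d) ℝ :=
  ∑ i : Fin N, w i • Matrix.vecMulVec (Xᵀ i - X.mulVec w) (Xᵀ i - X.mulVec w)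

/-- The constraint set `Δ_{N,ε}`. -/
def deltaSet (N : ℕ) (ε : ℝ) : Set (Fin N → ℝ) :=
  {w | (∑ i, w i) = 1 ∧ ∀ i, 0 ≤ w i ∧ w i ≤ 1 / ((1 - ε) * N)}

/-- Gradient in `w` of `F(w,u) = uᵀ Σ_w u`: the `i`-th coordinate is
`(X_iᵀu)² − 2(uᵀXw)(X_iᵀu)`. -/
noncomputable def gradFw {d N : ℕ} (X : Matrix (Fin d) (Fin N) ℝ) (w : Fin N → ℝ)
    (u : Fin d → ℝ) : Fin N → ℝ :=
  fun i => (Xᵀ i ⬝ᵥ u) ^ 2 - 2 * (u ⬝ᵥ X.mulVec w) * (Xᵀ i ⬝ᵥ u)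

/-- The matrix `Y = exp(ρ Σ_w) / tr(exp(ρ Σ_w))`. -/
noncomputable def ymat {d N : ℕ} (X : Matrix (Fin d) (Fin N) ℝ) (ρ : ℝ) (w : Fin N → ℝ) :
    Matrix (Fin d) (Fin d) ℝ :=
  ((NormedSpace.exp (ρ • covW X w)).trace)⁻¹ • NormedSpace.exp (ρ • covW X w)

/-- The softmax objective `f(w) = (1/ρ) ln tr exp(ρ Σ_w)`. -/
noncomputable def smaxObj {d N : ℕ} (X : Matrix (Fin d) (Fin N) ℝ) (ρ : ℝ) (w : Fin N → ℝ) : ℝ :=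
  (1 / ρ) * Real.log (NormedSpace.exp (ρ • covW X w)).trace

/-- Gradient of the softmax objective: `∇f(w)_i = X_iᵀ Y X_i − 2 X_iᵀ Y μ_w`. -/
noncomputable def gradSmax {d N : ℕ} (X : Matrix (Fin d) (Fin N) ℝ) (ρ : ℝ) (w : Fin N → ℝ) :
    Fin N → ℝ :=
  fun i => Xᵀ i ⬝ᵥ (ymat X ρ w).mulVec (Xᵀ i) - 2 * (Xᵀ i ⬝ᵥ (ymat X ρ w).mulVec (muW X w))

/-- Matrix logarithm of a symmetric matrix, via the spectral theorem (junk value `0` on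
non-Hermitian input). -/
noncomputable def matLog {n : ℕ} (Y : Matrix (Fin n) (Fin n) ℝ) : Matrix (Fin n) (Fin n) ℝ :=
  if h : Y.IsHermitian then h.cfc Real.log else 0


section AuxStmt3

private lemma sum_mulVec' {d N : ℕ} (s : Finset (Fin N)) (M : Fin N → Matrix (Fin d) (Fin d) ℝ)
    (u : Fin d → ℝ) : (∑ i ∈ s, M i).mulVec u = ∑ i ∈ s, (M i).mulVec u := by
  induction s using Finset.cons_induction with
  | empty => simp [Matrix.mulVec, dotProduct]
  | cons a s ha ih => rw [Finset.sum_cons, Finset.sum_cons, Matrix.add_mulVec, ih]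

private lemma quadform {d N : ℕ} (s : Finset (Fin N)) (c : Fin N → ℝ) (z : Fin N → Fin d → ℝ)
    (u : Fin d → ℝ) :
    u ⬝ᵥ (∑ i ∈ s, c i • Matrix.vecMulVec (z i) (z i)).mulVec u
      = ∑ i ∈ s, c i * (z i ⬝ᵥ u) ^ 2 := by
  rw [sum_mulVec']
  have hds : ∀ (t : Finset (Fin N)) (f : Fin N → Fin d → ℝ),
      u ⬝ᵥ (∑ i ∈ t, f i) = ∑ i ∈ t, u ⬝ᵥ f i := by
    intro t f
    induction t using Finset.cons_induction with
    | empty => simp [dotProduct]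
    | cons a s ha ih => rw [Finset.sum_cons, Finset.sum_cons, dotProduct_add, ih]
  rw [hds]
  refine Finset.sum_congr rfl fun i _ => ?_
  rw [Matrix.smul_mulVec, dotProduct_smul]
  have : (Matrix.vecMulVec (z i) (z i)).mulVec u = fun j => z i j * (z i ⬝ᵥ u) := by
    funext j
    simp [Matrix.mulVec, dotProduct, Matrix.vecMulVec_apply, Finset.mul_sum, mul_assoc]
  rw [this]
  simp only [smul_eq_mul, dotProduct]
  have h2 : ∀ D : ℝ, (∑ x, u x * (z i x * D)) = (∑ x, z i x * u x) * D := by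
    intro D
    rw [Finset.sum_mul]
    exact Finset.sum_congr rfl fun x _ => by ring
  rw [h2]
  ring

private lemma rayleigh_le {d : ℕ} (A : Matrix (Fin d) (Fin d) ℝ) (u : Fin d → ℝ)
    (hu : vnorm u = 1) : |u ⬝ᵥ A.mulVec u| ≤ specNorm A := by
  set u' : EuclideanSpace ℝ (Fin d) := WithLp.toLp 2 u with hu'
  have hnorm : ‖u'‖ = 1 := by
    rw [EuclideanSpace.norm_eq]
    simpa [Real.norm_eq_abs, sq_abs, vnorm] using hu
  have h1 : u ⬝ᵥ A.mulVec u
      = inner ℝ u' ((LinearMap.toContinuousLinearMap (Matrix.toEuclideanLin A)) u') := by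
    simp only [LinearMap.coe_toContinuousLinearMap', Matrix.toEuclideanLin_apply]
    simp [hu', PiLp.inner_apply, dotProduct, Matrix.mulVec, RCLike.inner_apply, mul_comm]
  rw [h1]
  calc |inner ℝ u' ((LinearMap.toContinuousLinearMap (Matrix.toEuclideanLin A)) u')|
      ≤ ‖u'‖ * ‖(LinearMap.toContinuousLinearMap (Matrix.toEuclideanLin A)) u'‖ :=
        abs_real_inner_le_norm _ _
    _ ≤ ‖u'‖ * (specNorm A * ‖u'‖) := by
        gcongr
        exact ContinuousLinearMap.le_opNorm _ _
    _ = specNorm A := by rw [hnorm]; ring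

private lemma lambdaMax_le_specNorm {d : ℕ} (A : Matrix (Fin d) (Fin d) ℝ) :
    lambdaMax A ≤ specNorm A := by
  apply Real.sSup_le
  · rintro x ⟨v, hv, rfl⟩
    exact le_trans (le_abs_self _) (rayleigh_le A v hv)
  · exact norm_nonneg _

private lemma contra3 (ε c₁ c₂ c₄ δ S T b s : ℝ)
    (hε : 0 < ε) (hε1 : ε ≤ 1/100) (hc₁ : 1 ≤ c₁) (hc₂ : 1 ≤ c₂)
    (hc₄1 : 100 ≤ c₄) (hc₄2 : 50*c₁ ≤ c₄)
    (hs : 2 ≤ s) (hεs : ε*s ≤ 1/10)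
    (hδ : c₂*ε*s ≤ δ)
    (hS : S ≤ 1 + c₁*ε*s^2) (hT : T^2 ≤ S) (hb : b^2 ≤ δ^2)
    (hmain : 1 + c₄*δ^2/ε ≤ S + 2*b*T + b^2) : False := by
  have hs0 : 0 < s := by linarith
  have h0 : ε*s ≤ δ := by
    have : 0 ≤ (c₂-1)*(ε*s) := mul_nonneg (by linarith) (by positivity)
    nlinarith
  have hδ0 : 0 < δ := lt_of_lt_of_le (by positivity) h0
  have hK0 : 0 ≤ c₁*ε*s^2 := by positivity
  have hbabs : |b| ≤ δ := by
    rw [← Real.sqrt_sq_eq_abs]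
    calc Real.sqrt (b^2) ≤ Real.sqrt (δ^2) := Real.sqrt_le_sqrt hb
      _ = δ := Real.sqrt_sq hδ0.le
  have hTabs : |T| ≤ 1 + c₁*ε*s^2/2 := by
    rw [← Real.sqrt_sq_eq_abs]
    calc Real.sqrt (T^2) ≤ Real.sqrt ((1 + c₁*ε*s^2/2)^2) := by
          apply Real.sqrt_le_sqrt; nlinarith
      _ = 1 + c₁*ε*s^2/2 := Real.sqrt_sq (by nlinarith)
  have hcross : 2*b*T ≤ 2*δ*(1 + c₁*ε*s^2/2) := by
    have h1 : b*T ≤ |b| * |T| := le_trans (le_abs_self _) (abs_mul b T).le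
    have h2 : |b| * |T| ≤ δ*(1 + c₁*ε*s^2/2) :=
      mul_le_mul hbabs hTabs (abs_nonneg _) hδ0.le
    linarith
  have hm2 : ε + c₄*δ^2 ≤ (S + 2*b*T + b^2)*ε := by
    have h3 := mul_le_mul_of_nonneg_right hmain hε.le
    calc ε + c₄*δ^2 = (1 + c₄*δ^2/ε)*ε := by field_simp
      _ ≤ (S + 2*b*T + b^2)*ε := h3
  have hδsq : ε^2*s^2 ≤ δ^2 := by
    have := mul_le_mul h0 h0 (by positivity) hδ0.le
    linarith
  have hP1 : c₁*ε*s^2*ε ≤ c₄*δ^2/3 := by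
    have := mul_le_mul (show c₁ ≤ c₄/3 by linarith) hδsq (by positivity)
      (show (0:ℝ) ≤ c₄/3 by linarith)
    linarith
  have hP2 : δ^2*ε ≤ c₄*δ^2/3 := by
    have := mul_nonneg (show 0 ≤ c₄/3 - ε by linarith) (sq_nonneg δ)
    nlinarith [sq_nonneg δ]
  have hP3 : 2*δ*(1 + c₁*ε*s^2/2)*ε < c₄*δ^2/3 := by
    have key : 2*ε + c₁*ε^2*s^2 < c₄*δ/3 := by
      have h1 : (100:ℝ)*(ε*s) ≤ c₄*δ :=
        mul_le_mul hc₄1 h0 (by positivity) (by linarith)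
      have h2 : (50*c₁)*(ε*s) ≤ c₄*δ :=
        mul_le_mul hc₄2 h0 (by positivity) (by linarith)
      have h3 : ε*2 < ε*(100/6*s) :=
        mul_lt_mul_of_pos_left (show (2:ℝ) < 100/6*s by linarith) hε
      have h4 : c₁*(ε*s)*(ε*s) ≤ c₁*(ε*s)*(50/6) :=
        mul_le_mul_of_nonneg_left (show ε*s ≤ 50/6 by linarith) (by positivity)
      linarith
    have := mul_lt_mul_of_pos_left key hδ0
    linarith
  have hRHS : (S + 2*b*T + b^2)*ε ≤ (1 + c₁*ε*s^2 + 2*δ*(1 + c₁*ε*s^2/2) + δ^2)*ε := by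
    apply mul_le_mul_of_nonneg_right _ hε.le
    linarith
  have hexp : (1 + c₁*ε*s^2 + 2*δ*(1 + c₁*ε*s^2/2) + δ^2)*ε
      = ε + c₁*ε*s^2*ε + 2*δ*(1 + c₁*ε*s^2/2)*ε + δ^2*ε := by ring
  linarith

private lemma log_facts3 (ε : ℝ) (hε : 0 < ε) (hε1 : ε ≤ 1/100) :
    2 ≤ Real.sqrt (Real.log (1/ε)) ∧ ε * Real.sqrt (Real.log (1/ε)) ≤ 1/10 := by
  have hinv : (100:ℝ) ≤ 1/ε := by
    rw [le_div_iff₀ hε]; linarith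
  have hinv0 : (0:ℝ) < 1/ε := by positivity
  have hL4 : (4:ℝ) ≤ Real.log (1/ε) := by
    rw [Real.le_log_iff_exp_le hinv0]
    have h1 : Real.exp 4 = Real.exp 1 ^ 4 := by
      rw [← Real.exp_nat_mul]; norm_num
    have h2 : Real.exp 1 ^ 4 < 2.7182818286 ^ 4 := by
      apply pow_lt_pow_left₀ Real.exp_one_lt_d9 (Real.exp_pos 1).le
      norm_num
    have h3 : (2.7182818286:ℝ) ^ 4 ≤ 100 := by norm_num
    linarith [hinv, h1 ▸ h2.le.trans h3]
  have hL0 : (0:ℝ) ≤ Real.log (1/ε) := by linarith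
  have hs2 : 2 ≤ Real.sqrt (Real.log (1/ε)) := by
    rw [show (2:ℝ) = Real.sqrt 4 by
      rw [show (4:ℝ) = 2^2 by norm_num, Real.sqrt_sq]; norm_num]
    exact Real.sqrt_le_sqrt hL4
  refine ⟨hs2, ?_⟩
  have hεL : ε * Real.log (1/ε) ≤ 1 := by
    have h1 : Real.log (1/ε) ≤ 1/ε - 1 := Real.log_le_sub_one_of_pos hinv0
    have h2 : ε * Real.log (1/ε) ≤ ε * (1/ε - 1) :=
      mul_le_mul_of_nonneg_left h1 hε.le
    have h3 : ε * (1/ε - 1) = 1 - ε := by field_simp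
    linarith
  have hsq : (ε * Real.sqrt (Real.log (1/ε)))^2 ≤ 1/100 := by
    have h4 : Real.sqrt (Real.log (1/ε)) ^ 2 = Real.log (1/ε) := Real.sq_sqrt hL0
    have h5 : (ε * Real.sqrt (Real.log (1/ε)))^2 = ε * (ε * Real.log (1/ε)) := by
      rw [mul_pow, h4]; ring
    rw [h5]
    nlinarith
  nlinarith [sq_nonneg (ε * Real.sqrt (Real.log (1/ε)) - 1/10),
    mul_nonneg hε.le (Real.sqrt_nonneg (Real.log (1/ε)))]

end AuxStmt3
/-- every first-order stationary point of the spectral-norm objective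
is a good solution. -/
theorem stmt_3 : ∃ ε₀ : ℝ, 0 < ε₀ ∧
    ∀ (d N : ℕ) (X : Matrix (Fin d) (Fin N) ℝ) (μs : Fin d → ℝ)
      (G B : Finset (Fin N)) (ε c₁ c₂ c₃ c₄ : ℝ),
    Disjoint G B → G ∪ B = Finset.univ →
    (G.card : ℝ) = (1 - ε) * N → (B.card : ℝ) = ε * N →
    0 < ε → ε ≤ ε₀ →
    1 ≤ c₁ → 1 ≤ c₂ → 5 * c₁ ≤ c₃ → max 100 (max (6 * c₃) (50 * c₁)) ≤ c₄ →
    (∀ v ∈ deltaSet N (2 * ε),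
      specNorm ((∑ i ∈ G, v i • Matrix.vecMulVec (Xᵀ i - μs) (Xᵀ i - μs)) - 1) ≤
        c₁ * ε * Real.log (1 / ε)) →
    (∀ v ∈ deltaSet N (2 * ε),
      c₂ * ε * Real.sqrt (Real.log (1 / ε)) ≤ vnorm (muW X v - μs) →
      1 + c₄ * vnorm (muW X v - μs) ^ 2 / ε ≤ lambdaMax (covW X v)) →
    ∀ w ∈ deltaSet N (2 * ε),
    (∃ u : Fin d → ℝ, vnorm u = 1 ∧
      u ⬝ᵥ (covW X w).mulVec u = specNorm (covW X w) ∧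
      ∀ w' ∈ deltaSet N (2 * ε), 0 ≤ ∑ i, gradFw X w u i * (w' i - w i)) →
    vnorm (muW X w - μs) < c₂ * ε * Real.sqrt (Real.log (1 / ε)) := by

  refine ⟨1/100, by norm_num, ?_⟩
  intro d N X μs G B ε c₁ c₂ c₃ c₄ hGB hGBu hG hB hε hε0 hc₁ hc₂ hc₃ hc₄ hconc hstab w hw hstatex
  obtain ⟨u, hu1, hu2, hstat⟩ := hstatex
  by_contra hcon
  push_neg at hcon
  have hc₄1 : (100:ℝ) ≤ c₄ := le_trans (le_max_left _ _) hc₄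
  have hc₄2 : 50*c₁ ≤ c₄ :=
    le_trans (le_trans (le_max_right _ _) (le_max_right _ _)) hc₄
  obtain ⟨hs2, hεs⟩ := log_facts3 ε hε hε0
  have hL0 : (0:ℝ) ≤ Real.log (1/ε) := by
    apply Real.log_nonneg
    rw [le_div_iff₀ hε]; linarith
  set s : ℝ := Real.sqrt (Real.log (1/ε)) with hsdef
  have hss : s^2 = Real.log (1/ε) := Real.sq_sqrt hL0
  set δ : ℝ := vnorm (muW X w - μs) with hδdef
  -- N positive
  have hN : (0:ℝ) < N := by
    rcases Nat.eq_zero_or_pos N with h | h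
    · exfalso
      subst h
      have h1 := hw.1
      simp at h1
    · exact_mod_cast h
  have hGcard : (0:ℝ) < G.card := by rw [hG]; nlinarith
  have hGcard' : ((G.card:ℝ))⁻¹ ≠ 0 := by positivity
  have hGne : (G.card:ℝ) ≠ 0 := ne_of_gt hGcard
  -- the comparison point: uniform weights on G
  set v : Fin N → ℝ := fun i => if i ∈ G then ((G.card:ℝ))⁻¹ else 0 with hvdef
  have hvsum : ∀ h : Fin N → ℝ, (∑ i, v i * h i) = ∑ i ∈ G, ((G.card:ℝ))⁻¹ * h i := by
    intro h
    rw [show (∑ i, v i * h i) = ∑ i, if i ∈ G then ((G.card:ℝ))⁻¹ * h i else 0 from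
      Finset.sum_congr rfl fun i _ => by by_cases hi : i ∈ G <;> simp [hvdef, hi]]
    rw [Finset.sum_ite_mem, Finset.univ_inter]
  have hGsum : ∑ i ∈ G, ((G.card:ℝ))⁻¹ = 1 := by
    rw [Finset.sum_const, nsmul_eq_mul, mul_inv_cancel₀ hGne]
  have hvsum1 : ∑ i, v i = 1 := by
    calc ∑ i, v i = ∑ i, v i * 1 := by simp
      _ = ∑ i ∈ G, ((G.card:ℝ))⁻¹ * 1 := hvsum _
      _ = 1 := by simpa using hGsum
  have hv : v ∈ deltaSet N (2*ε) := by
    refine ⟨hvsum1, fun i => ⟨?_, ?_⟩⟩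
    · simp only [hvdef]
      split
      · positivity
      · exact le_rfl
    · have h2ε : (0:ℝ) < (1 - 2*ε)*N := by nlinarith
      simp only [hvdef]
      split
      · rw [hG, one_div]
        exact inv_anti₀ h2ε (by nlinarith)
      · positivity
  -- notation
  set a : Fin N → ℝ := fun i => (Xᵀ i - μs) ⬝ᵥ u with hadef
  set b : ℝ := (μs - X.mulVec w) ⬝ᵥ u with hbdef
  set S : ℝ := ∑ i ∈ G, ((G.card:ℝ))⁻¹ * (a i)^2 with hSdef
  set T : ℝ := ∑ i ∈ G, ((G.card:ℝ))⁻¹ * a i with hTdef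
  have hz : ∀ i, (Xᵀ i - X.mulVec w) ⬝ᵥ u = a i + b := by
    intro i
    simp only [hadef, hbdef]
    rw [sub_dotProduct, sub_dotProduct, sub_dotProduct]
    ring
  have huu : u ⬝ᵥ u = 1 := by
    have h1 : ∑ i, u i ^ 2 = 1 := by
      have h2 := congrArg (·^2) hu1
      simpa [vnorm, Real.sq_sqrt (Finset.sum_nonneg fun i _ => sq_nonneg (u i))] using h2
    simpa [dotProduct, sq] using h1
  -- concentration bound: S ≤ 1 + c₁ ε log(1/ε)
  have hMnorm := hconc v hv
  have hMu : u ⬝ᵥ (∑ i ∈ G, v i • Matrix.vecMulVec (Xᵀ i - μs) (Xᵀ i - μs)).mulVec u = S := by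
    rw [quadform]
    refine Finset.sum_congr rfl fun i hi => ?_
    simp only [hvdef, hadef]
    rw [if_pos hi]
  have hSle : S ≤ 1 + c₁*ε*s^2 := by
    have h1 : u ⬝ᵥ ((∑ i ∈ G, v i • Matrix.vecMulVec (Xᵀ i - μs) (Xᵀ i - μs)) - 1).mulVec u
        = S - 1 := by
      rw [Matrix.sub_mulVec, dotProduct_sub, Matrix.one_mulVec, hMu, huu]
    have h2 := le_trans (le_abs_self _)
      (rayleigh_le ((∑ i ∈ G, v i • Matrix.vecMulVec (Xᵀ i - μs) (Xᵀ i - μs)) - 1) u hu1)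
    rw [h1] at h2
    have h3 := le_trans h2 hMnorm
    rw [hss]
    linarith
  -- Cauchy-Schwarz: T² ≤ S
  have hT2 : T^2 ≤ S := by
    have hCS := sum_mul_sq_le_sq_mul_sq G (fun _ => Real.sqrt ((G.card:ℝ)⁻¹))
      (fun i => Real.sqrt ((G.card:ℝ)⁻¹) * a i)
    have e1 : ∀ i ∈ G, Real.sqrt ((G.card:ℝ)⁻¹) * (Real.sqrt ((G.card:ℝ)⁻¹) * a i)
        = ((G.card:ℝ))⁻¹ * a i := fun i _ => by
      rw [← mul_assoc, Real.mul_self_sqrt (by positivity)]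
    have e2 : ∀ i ∈ G, (Real.sqrt ((G.card:ℝ)⁻¹) * a i)^2 = ((G.card:ℝ))⁻¹ * (a i)^2 :=
      fun i _ => by rw [mul_pow, Real.sq_sqrt (by positivity)]
    have e3 : ∀ i ∈ G, (Real.sqrt ((G.card:ℝ)⁻¹))^2 = ((G.card:ℝ))⁻¹ :=
      fun i _ => Real.sq_sqrt (by positivity)
    rw [Finset.sum_congr rfl e1, Finset.sum_congr rfl e2, Finset.sum_congr rfl e3, hGsum] at hCS
    calc T^2 ≤ 1 * S := hCS
      _ = S := one_mul S
  -- b² ≤ δ²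
  have hb2 : b^2 ≤ δ^2 := by
    have hCS := sum_mul_sq_le_sq_mul_sq Finset.univ (fun i => (μs - X.mulVec w) i) u
    have e1 : ∀ i ∈ Finset.univ, ((μs - X.mulVec w) i)^2 = ((muW X w - μs) i)^2 :=
      fun i _ => by
        show (μs i - X.mulVec w i)^2 = (X.mulVec w i - μs i)^2
        ring
    rw [Finset.sum_congr rfl e1] at hCS
    have h4 : ∑ i, u i ^ 2 = 1 := by
      have h2 := congrArg (·^2) hu1
      simpa [vnorm, Real.sq_sqrt (Finset.sum_nonneg fun i _ => sq_nonneg (u i))] using h2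
    rw [h4, mul_one] at hCS
    have h5 : δ^2 = ∑ i, ((muW X w - μs) i)^2 := by
      rw [hδdef]
      exact Real.sq_sqrt (Finset.sum_nonneg fun i _ => sq_nonneg _)
    rw [h5]
    exact le_trans (le_of_eq (by rw [hbdef]; rfl)) hCS
  -- quadratic form of covW
  set g : Fin N → ℝ := fun i => ((Xᵀ i - X.mulVec w) ⬝ᵥ u)^2 with hgdef
  have hE1 : u ⬝ᵥ (covW X w).mulVec u = ∑ i, w i * g i := by
    have hc : covW X w
        = ∑ i ∈ Finset.univ, w i • Matrix.vecMulVec (Xᵀ i - X.mulVec w) (Xᵀ i - X.mulVec w) :=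
      rfl
    rw [hc, quadform]
  -- stationarity: ∑ w g ≤ ∑ v g
  have hgrad : ∀ i, gradFw X w u i = g i - (u ⬝ᵥ X.mulVec w)^2 := by
    intro i
    simp only [gradFw, hgdef]
    rw [sub_dotProduct, dotProduct_comm (Xᵀ i) u]
    rw [dotProduct_comm (X.mulVec w) u]
    ring
  have hstat1 := hstat v hv
  have hsplit : ∑ i, gradFw X w u i * (v i - w i)
      = ((∑ i, v i * g i) - (∑ i, w i * g i))
        - (u ⬝ᵥ X.mulVec w)^2 * ((∑ i, v i) - (∑ i, w i)) := by
    have e : ∀ i ∈ Finset.univ, gradFw X w u i * (v i - w i)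
        = (v i * g i - w i * g i) - (u ⬝ᵥ X.mulVec w)^2 * (v i - w i) := fun i _ => by
      rw [hgrad]; ring
    rw [Finset.sum_congr rfl e, Finset.sum_sub_distrib, Finset.sum_sub_distrib,
      ← Finset.mul_sum, Finset.sum_sub_distrib]
  have hE2 : ∑ i, w i * g i ≤ ∑ i, v i * g i := by
    rw [hsplit, hvsum1, hw.1] at hstat1
    simp only [sub_self, mul_zero, sub_zero] at hstat1
    linarith
  -- value at v
  have hE3 : ∑ i, v i * g i = S + 2*b*T + b^2 := by
    rw [hvsum g]
    have e : ∀ i ∈ G, ((G.card:ℝ))⁻¹ * g i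
        = ((G.card:ℝ))⁻¹ * (a i)^2 + 2*b*(((G.card:ℝ))⁻¹ * a i) + b^2*((G.card:ℝ))⁻¹ :=
      fun i _ => by simp only [hgdef]; rw [hz i]; ring
    rw [Finset.sum_congr rfl e, Finset.sum_add_distrib, Finset.sum_add_distrib]
    have h1 : ∑ i ∈ G, 2*b*(((G.card:ℝ))⁻¹ * a i) = 2*b*T := by
      rw [hTdef, Finset.mul_sum]
    have h2 : ∑ i ∈ G, b^2*((G.card:ℝ))⁻¹ = b^2 := by
      rw [← Finset.mul_sum, hGsum, mul_one]
    rw [h1, h2, ← hSdef]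
  -- stability + chain
  have hstab1 := hstab w hw hcon
  have hchain : 1 + c₄*δ^2/ε ≤ S + 2*b*T + b^2 :=
    calc 1 + c₄*δ^2/ε = 1 + c₄ * vnorm (muW X w - μs) ^ 2 / ε := by rw [← hδdef]
      _ ≤ lambdaMax (covW X w) := hstab1
      _ ≤ specNorm (covW X w) := lambdaMax_le_specNorm _
      _ = u ⬝ᵥ (covW X w).mulVec u := hu2.symm
      _ = ∑ i, w i * g i := hE1
      _ ≤ ∑ i, v i * g i := hE2
      _ = S + 2*b*T + b^2 := hE3
  exact contra3 ε c₁ c₂ c₄ δ S T b s hε hε0 hc₁ hc₂ hc₄1 hc₄2 hs2 hεs hcon hSle hT2 hb2 hchain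
end

section
/- Let 0 < ε < 1/2 and let u ∈ ℝ^d be a unit vector. Then: (i) for every w ∈ Δ_{N,2ε}, ‖∇_w F(w,u)‖₂ ≤ √N · max_{1≤i≤N} ‖X_i‖₂² + 2 · max_{1≤i≤N} ‖X_i‖₂ · ‖X‖₂; and (ii) for all w, w̃ ∈ ℝ^N, ‖∇_w F(w,u) − ∇_w F(w̃,u)‖₂ ≤ 2‖X‖₂² · ‖w − w̃‖₂. -/
open Matrix Finset RealInnerProductSpace

lemma vnorm_eq_norm {n : ℕ} (v : Fin n → ℝ) :
    vnorm v = ‖(WithLp.equiv 2 (Fin n → ℝ)).symm v‖ := by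
  rw [EuclideanSpace.norm_eq, vnorm]
  congr 1
  refine Finset.sum_congr rfl fun i _ => ?_
  simp [Real.norm_eq_abs, sq_abs]

lemma vnorm_nonneg {n : ℕ} (v : Fin n → ℝ) : 0 ≤ vnorm v := Real.sqrt_nonneg _

lemma vnorm_smul {n : ℕ} (c : ℝ) (v : Fin n → ℝ) : vnorm (c • v) = |c| * vnorm v := by
  rw [vnorm_eq_norm, vnorm_eq_norm]
  rw [show (WithLp.equiv 2 (Fin n → ℝ)).symm (c • v) = c • (WithLp.equiv 2 (Fin n → ℝ)).symm v from rfl]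
  rw [norm_smul, Real.norm_eq_abs]

lemma vnorm_add_le {n : ℕ} (a b : Fin n → ℝ) : vnorm (a + b) ≤ vnorm a + vnorm b := by
  rw [vnorm_eq_norm, vnorm_eq_norm, vnorm_eq_norm]
  exact norm_add_le _ _

lemma abs_dot_le {n : ℕ} (v w : Fin n → ℝ) : |v ⬝ᵥ w| ≤ vnorm v * vnorm w := by
  rw [vnorm_eq_norm, vnorm_eq_norm]
  have h : v ⬝ᵥ w = ⟪(WithLp.equiv 2 (Fin n → ℝ)).symm v, (WithLp.equiv 2 (Fin n → ℝ)).symm w⟫ := by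
    simp [PiLp.inner_apply, RCLike.inner_apply, dotProduct, mul_comm]
  rw [h]
  exact abs_real_inner_le_norm _ _

lemma vnorm_mulVec_le {m n : ℕ} (A : Matrix (Fin m) (Fin n) ℝ) (v : Fin n → ℝ) :
    vnorm (A *ᵥ v) ≤ specNorm A * vnorm v := by
  rw [vnorm_eq_norm, vnorm_eq_norm]
  exact (LinearMap.toContinuousLinearMap (Matrix.toEuclideanLin A)).le_opNorm _

lemma specNorm_transpose {m n : ℕ} (A : Matrix (Fin m) (Fin n) ℝ) :
    specNorm Aᵀ = specNorm A := by
  rw [show Aᵀ = Aᴴ from (Matrix.conjTranspose_eq_transpose_of_trivial A).symm]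
  rw [specNorm, specNorm, Matrix.toEuclideanLin_conjTranspose_eq_adjoint,
    LinearMap.adjoint_toContinuousLinearMap]
  exact ContinuousLinearMap.adjoint.norm_map _

lemma vnorm_le_of_bound {n : ℕ} (v : Fin n → ℝ) (C : ℝ) (hC : 0 ≤ C)
    (h : ∀ i, |v i| ≤ C) : vnorm v ≤ Real.sqrt n * C := by
  have h1 : ∑ i, v i ^ 2 ≤ (n : ℝ) * C ^ 2 := by
    calc ∑ i, v i ^ 2 ≤ ∑ _i : Fin n, C ^ 2 :=
          Finset.sum_le_sum fun i _ => by
            rw [← sq_abs]; exact pow_le_pow_left₀ (abs_nonneg _) (h i) 2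
      _ = (n : ℝ) * C ^ 2 := by simp [mul_comm]
  calc vnorm v ≤ Real.sqrt ((n : ℝ) * C ^ 2) := Real.sqrt_le_sqrt h1
    _ = Real.sqrt n * C := by
        rw [Real.sqrt_mul (Nat.cast_nonneg n), Real.sqrt_sq hC]

/-- Lipschitz and smoothness bounds for `∇_w F(w,u)`. -/
theorem stmt_7 {d N : ℕ} (X : Matrix (Fin d) (Fin N) ℝ) (ε : ℝ)
    (hε0 : 0 < ε) (hε1 : ε < 1 / 2)
    (u : Fin d → ℝ) (hu : vnorm u = 1) :
    (∀ w ∈ deltaSet N (2 * ε),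
      vnorm (gradFw X w u) ≤
        Real.sqrt N * (⨆ i : Fin N, vnorm (Xᵀ i) ^ 2) +
          2 * (⨆ i : Fin N, vnorm (Xᵀ i)) * specNorm X) ∧
    ∀ w w' : Fin N → ℝ,
      vnorm (gradFw X w u - gradFw X w' u) ≤ 2 * specNorm X ^ 2 * vnorm (w - w') := by
  have hXt : ∀ i, (Xᵀ *ᵥ u) i = Xᵀ i ⬝ᵥ u := fun i => rfl
  have hg : vnorm (Xᵀ *ᵥ u) ≤ specNorm X := by
    have := vnorm_mulVec_le Xᵀ u
    rwa [specNorm_transpose, hu, mul_one] at this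
  have hspec : 0 ≤ specNorm X := norm_nonneg _
  constructor
  · -- part (i)
    rintro w ⟨hsum, hw⟩
    have hN : N ≠ 0 := by
      rintro rfl
      simp at hsum
    haveI : Nonempty (Fin N) := Fin.pos_iff_nonempty.mp (Nat.pos_of_ne_zero hN)
    set M1 := ⨆ i : Fin N, vnorm (Xᵀ i) with hM1def
    set M2 := ⨆ i : Fin N, vnorm (Xᵀ i) ^ 2 with hM2def
    have hM1 : ∀ i, vnorm (Xᵀ i) ≤ M1 := fun i =>
      le_ciSup (f := fun j => vnorm (Xᵀ j)) (Set.Finite.bddAbove (Set.finite_range _)) i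
    have hM2 : ∀ i, vnorm (Xᵀ i) ^ 2 ≤ M2 := fun i =>
      le_ciSup (f := fun j => vnorm (Xᵀ j) ^ 2) (Set.Finite.bddAbove (Set.finite_range _)) i
    have hM1nn : 0 ≤ M1 := le_trans (vnorm_nonneg _) (hM1 (Classical.arbitrary _))
    have hM2nn : 0 ≤ M2 := le_trans (sq_nonneg _) (hM2 (Classical.arbitrary _))
    have hdotbd : ∀ i, |Xᵀ i ⬝ᵥ u| ≤ vnorm (Xᵀ i) := by
      intro i
      have := abs_dot_le (Xᵀ i) u
      rwa [hu, mul_one] at this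
    -- decompose
    have hdecomp : gradFw X w u
        = (fun i => (Xᵀ i ⬝ᵥ u) ^ 2) + (-(2 * (u ⬝ᵥ X *ᵥ w))) • (Xᵀ *ᵥ u) := by
      funext i
      simp only [gradFw, Pi.add_apply, Pi.smul_apply, hXt, smul_eq_mul]
      ring
    have h1 : vnorm (fun i => (Xᵀ i ⬝ᵥ u) ^ 2) ≤ Real.sqrt N * M2 := by
      refine vnorm_le_of_bound _ M2 hM2nn fun i => ?_
      rw [abs_of_nonneg (sq_nonneg _), ← sq_abs]
      exact le_trans (pow_le_pow_left₀ (abs_nonneg _) (hdotbd i) 2) (hM2 i)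
    have hdot : |u ⬝ᵥ X *ᵥ w| ≤ M1 := by
      have hrw : u ⬝ᵥ X *ᵥ w = ∑ i, w i * (Xᵀ i ⬝ᵥ u) := by
        rw [Matrix.dotProduct_mulVec, dotProduct]
        refine Finset.sum_congr rfl fun i _ => ?_
        rw [Matrix.vecMul, dotProduct, dotProduct]
        simp [Matrix.transpose_apply, Finset.mul_sum, mul_comm]
      rw [hrw]
      calc |∑ i, w i * (Xᵀ i ⬝ᵥ u)| ≤ ∑ i, |w i * (Xᵀ i ⬝ᵥ u)| :=
            Finset.abs_sum_le_sum_abs _ _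
        _ ≤ ∑ i, w i * M1 := by
            refine Finset.sum_le_sum fun i _ => ?_
            rw [abs_mul, abs_of_nonneg (hw i).1]
            exact mul_le_mul_of_nonneg_left (le_trans (hdotbd i) (hM1 i)) (hw i).1
        _ = M1 := by rw [← Finset.sum_mul, hsum, one_mul]
    have h2 : vnorm ((-(2 * (u ⬝ᵥ X *ᵥ w))) • (Xᵀ *ᵥ u)) ≤ 2 * M1 * specNorm X := by
      rw [vnorm_smul, abs_neg, abs_mul, abs_two]
      have hc : 2 * |u ⬝ᵥ X *ᵥ w| ≤ 2 * M1 := by linarith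
      exact mul_le_mul hc hg (vnorm_nonneg _) (by linarith)
    calc vnorm (gradFw X w u) ≤ vnorm (fun i => (Xᵀ i ⬝ᵥ u) ^ 2)
          + vnorm ((-(2 * (u ⬝ᵥ X *ᵥ w))) • (Xᵀ *ᵥ u)) := by
          rw [hdecomp]; exact vnorm_add_le _ _
      _ ≤ Real.sqrt N * M2 + 2 * M1 * specNorm X := add_le_add h1 h2
  · -- part (ii)
    intro w w'
    have hdecomp : gradFw X w u - gradFw X w' u
        = (2 * (u ⬝ᵥ X *ᵥ (w' - w))) • (Xᵀ *ᵥ u) := by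
      funext i
      simp only [Pi.sub_apply, Pi.smul_apply, gradFw, hXt, smul_eq_mul,
        Matrix.mulVec_sub, dotProduct_sub]
      ring
    rw [hdecomp, vnorm_smul, abs_mul, abs_two]
    have hvv : vnorm (w' - w) = vnorm (w - w') := by
      have : w' - w = (-1 : ℝ) • (w - w') := by rw [neg_one_smul]; exact (neg_sub w w').symm
      rw [this, vnorm_smul]; simp
    have hc : |u ⬝ᵥ X *ᵥ (w' - w)| ≤ specNorm X * vnorm (w - w') := by
      calc |u ⬝ᵥ X *ᵥ (w' - w)| ≤ vnorm u * vnorm (X *ᵥ (w' - w)) := abs_dot_le _ _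
        _ = vnorm (X *ᵥ (w' - w)) := by rw [hu, one_mul]
        _ ≤ specNorm X * vnorm (w' - w) := vnorm_mulVec_le _ _
        _ = specNorm X * vnorm (w - w') := by rw [hvv]
    have hgn : 0 ≤ vnorm (Xᵀ *ᵥ u) := vnorm_nonneg _
    calc 2 * |u ⬝ᵥ X *ᵥ (w' - w)| * vnorm (Xᵀ *ᵥ u)
        ≤ 2 * (specNorm X * vnorm (w - w')) * specNorm X := by
          exact mul_le_mul (by linarith) hg hgn
            (by have := vnorm_nonneg (w - w'); nlinarith)
      _ = 2 * specNorm X ^ 2 * vnorm (w - w') := by ring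
end

section
/- Let 0 < ε < 1/4 with εN an integer, and let constants satisfy c₁ ≥ 1, c₂ ≥ 1, and c₃ ≥ 5c₁. Assume the concentration condition with constant c₁. Let w ∈ Δ_{N,2ε}, set r = ‖μ_w − μ*‖₂, and assume r ≥ c₂ ε √(ln(1/ε)). Let Y = exp(ρΣ_w)/tr(exp(ρΣ_w)) with ρ = ln(d)/ε. Then there exists j ∈ G with w_j < 1/((1−2ε)N) such that ∇f(w)_j − μ*ᵀY(μ* − 2μ_w) ≤ c₃ r²/ε². -/
open Matrix Finset RealInnerProductSpace

lemma dot_self_nonneg {n : ℕ} (v : Fin n → ℝ) : 0 ≤ v ⬝ᵥ v := by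
  apply Finset.sum_nonneg; intro i _; exact mul_self_nonneg _

lemma vnorm_mul_self {n : ℕ} (v : Fin n → ℝ) : vnorm v * vnorm v = v ⬝ᵥ v := by
  rw [vnorm]
  rw [Real.mul_self_sqrt (by positivity)]
  simp [dotProduct, sq]

lemma specNorm_bound {n : ℕ} (M : Matrix (Fin n) (Fin n) ℝ) (u v : Fin n → ℝ) :
    |u ⬝ᵥ M *ᵥ v| ≤ specNorm M * (vnorm u * vnorm v) := by
  set u' := (WithLp.equiv 2 (Fin n → ℝ)).symm u
  set v' := (WithLp.equiv 2 (Fin n → ℝ)).symm v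
  have h1 : u ⬝ᵥ M *ᵥ v = inner (𝕜 := ℝ) u' ((LinearMap.toContinuousLinearMap (Matrix.toEuclideanLin M)) v') := by
    rw [LinearMap.coe_toContinuousLinearMap', Matrix.toEuclideanLin_apply]
    simp [PiLp.inner_apply, dotProduct, u', v', RCLike.inner_apply, mul_comm]
  rw [h1, vnorm_eq_norm, vnorm_eq_norm]
  calc |inner (𝕜 := ℝ) u' ((LinearMap.toContinuousLinearMap (Matrix.toEuclideanLin M)) v')|
      ≤ ‖u'‖ * ‖(LinearMap.toContinuousLinearMap (Matrix.toEuclideanLin M)) v'‖ :=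
        abs_real_inner_le_norm _ _
    _ ≤ ‖u'‖ * (specNorm M * ‖v'‖) := by
        gcongr; exact ContinuousLinearMap.le_opNorm _ _
    _ = specNorm M * (‖u'‖ * ‖v'‖) := by ring

lemma sqrt_fact {d : ℕ} (hd : 0 < d) (A : Matrix (Fin d) (Fin d) ℝ) (hA : Aᵀ = A) :
    ∃ R : Matrix (Fin d) (Fin d) ℝ, Rᵀ = R ∧
      R * R = ((NormedSpace.exp A).trace)⁻¹ • NormedSpace.exp A ∧
      (((NormedSpace.exp A).trace)⁻¹ • NormedSpace.exp A).trace = 1 := by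
  set B := NormedSpace.exp ((1/2 : ℝ) • A) with hB
  have hBT : Bᵀ = B := by
    rw [hB, ← Matrix.exp_transpose, Matrix.transpose_smul, hA]
  have hBB : B * B = NormedSpace.exp A := by
    rw [hB, ← Matrix.exp_add_of_commute _ _ (Commute.refl _), ← add_smul]
    norm_num
  have htE : (NormedSpace.exp A).trace = ∑ i, ∑ k, (B i k)^2 := by
    rw [← hBB, Matrix.trace]
    congr 1; ext i
    rw [Matrix.diag, Matrix.mul_apply]
    congr 1; ext k
    rw [sq]; congr 1
    conv_lhs => rw [← hBT]
    rfl
  have htE0 : 0 < (NormedSpace.exp A).trace := by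
    rcases lt_or_eq_of_le (a := 0) (b := (NormedSpace.exp A).trace)
      (by rw [htE]; positivity) with h | h
    · exact h
    · exfalso
      have hB0 : B = 0 := by
        ext i k
        have h2 : ∑ i, ∑ k, (B i k)^2 = 0 := by rw [← htE, ← h]
        have h3 := (Finset.sum_eq_zero_iff_of_nonneg (f := fun i => ∑ k, (B i k)^2)
          (by intro i _; positivity)).mp h2 i (Finset.mem_univ i)
        have h4 := (Finset.sum_eq_zero_iff_of_nonneg (f := fun k => (B i k)^2)
          (by intro k _; positivity)).mp h3 k (Finset.mem_univ k)
        simpa using h4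
      have hone : (B * NormedSpace.exp (-((1/2 : ℝ) • A)) : Matrix (Fin d) (Fin d) ℝ) = 1 := by
        rw [hB, ← Matrix.exp_add_of_commute _ _ (Commute.refl ((1/2 : ℝ) • A)).neg_right]
        simp
      rw [hB0, zero_mul] at hone
      have := congr_fun (congr_fun hone ⟨0, hd⟩) ⟨0, hd⟩
      simp [Matrix.one_apply] at this
  refine ⟨(Real.sqrt ((NormedSpace.exp A).trace))⁻¹ • B, ?_, ?_, ?_⟩
  · rw [Matrix.transpose_smul, hBT]
  · rw [smul_mul_smul_comm, hBB, ← Real.sqrt_inv]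
    congr 1
    exact Real.mul_self_sqrt (inv_nonneg.mpr htE0.le)
  · rw [Matrix.trace_smul, smul_eq_mul, inv_mul_cancel₀ (ne_of_gt htE0)]

lemma vecMulVec_mulVec' {d : ℕ} (a b u : Fin d → ℝ) :
    Matrix.vecMulVec a b *ᵥ u = (b ⬝ᵥ u) • a := by
  ext k
  simp [Matrix.vecMulVec_apply, Matrix.mulVec, dotProduct, Finset.mul_sum,
    mul_assoc, mul_comm, mul_left_comm]

lemma dot_sum_mulVec {d N : ℕ} (s : Finset (Fin N)) (v : Fin N → ℝ) (x : Fin N → Fin d → ℝ)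
    (u : Fin d → ℝ) :
    u ⬝ᵥ (∑ i ∈ s, v i • Matrix.vecMulVec (x i) (x i)) *ᵥ u = ∑ i ∈ s, v i * (x i ⬝ᵥ u)^2 := by
  induction s using Finset.induction_on with
  | empty => simp
  | insert _ _ h ih =>
    rw [Finset.sum_insert h, Matrix.add_mulVec, dotProduct_add, ih, Finset.sum_insert h,
      Matrix.smul_mulVec, dotProduct_smul, vecMulVec_mulVec',
      dotProduct_smul]
    simp [dotProduct_comm u, sq, smul_eq_mul]

lemma quad_eval {d N : ℕ} (G : Finset (Fin N)) (v : Fin N → ℝ) (x : Fin N → Fin d → ℝ)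
    (u : Fin d → ℝ) :
    u ⬝ᵥ ((∑ i ∈ G, v i • Matrix.vecMulVec (x i) (x i)) - 1) *ᵥ u
      = (∑ i ∈ G, v i * (x i ⬝ᵥ u)^2) - u ⬝ᵥ u := by
  rw [Matrix.sub_mulVec, Matrix.one_mulVec, dotProduct_sub, dot_sum_mulVec]

lemma dot_self_sq {d : ℕ} (a : Fin d → ℝ) : a ⬝ᵥ a = ∑ i, (a i)^2 := by
  simp [dotProduct, sq]

lemma dot_self_nonneg' {d : ℕ} (a : Fin d → ℝ) : 0 ≤ a ⬝ᵥ a := by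
  rw [dot_self_sq]; positivity

lemma factor_dot {d : ℕ} {Y R : Matrix (Fin d) (Fin d) ℝ} (hRT : Rᵀ = R) (hRR : R * R = Y)
    (a b : Fin d → ℝ) : a ⬝ᵥ Y *ᵥ b = (R *ᵥ a) ⬝ᵥ (R *ᵥ b) := by
  rw [← hRR, ← Matrix.mulVec_mulVec, Matrix.dotProduct_mulVec]
  congr 1
  rw [← Matrix.mulVec_transpose, hRT]

lemma mulVec_row {d : ℕ} (R : Matrix (Fin d) (Fin d) ℝ) (a : Fin d → ℝ) (i : Fin d) :
    (R *ᵥ a) i = R i ⬝ᵥ a := rfl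

lemma trace_rows {d : ℕ} {Y R : Matrix (Fin d) (Fin d) ℝ} (hRT : Rᵀ = R) (hRR : R * R = Y)
    (htr : Y.trace = 1) : ∑ i, R i ⬝ᵥ R i = 1 := by
  have hsymm : ∀ i k, R k i = R i k := by
    intro i k; conv_lhs => rw [← hRT, Matrix.transpose_apply]
  rw [← htr, ← hRR, Matrix.trace]
  apply Finset.sum_congr rfl
  intro i _
  rw [Matrix.diag, Matrix.mul_apply, dotProduct]
  apply Finset.sum_congr rfl
  intro k _
  rw [hsymm i k]

lemma dot_Y_le {d : ℕ} {Y R : Matrix (Fin d) (Fin d) ℝ} (hRT : Rᵀ = R) (hRR : R * R = Y)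
    (htr : Y.trace = 1) (u : Fin d → ℝ) : u ⬝ᵥ Y *ᵥ u ≤ u ⬝ᵥ u := by
  rw [factor_dot hRT hRR, dot_self_sq]
  calc ∑ i, ((R *ᵥ u) i)^2 ≤ ∑ i, (R i ⬝ᵥ R i) * (u ⬝ᵥ u) := by
        apply Finset.sum_le_sum
        intro i _
        rw [mulVec_row]
        have := Finset.sum_mul_sq_le_sq_mul_sq Finset.univ (R i) u
        simpa [dotProduct, dot_self_sq, sq] using this
    _ = (∑ i, R i ⬝ᵥ R i) * (u ⬝ᵥ u) := by rw [← Finset.sum_mul]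
    _ = u ⬝ᵥ u := by rw [trace_rows hRT hRR htr, one_mul]

lemma dot_Y_nonneg {d : ℕ} {Y R : Matrix (Fin d) (Fin d) ℝ} (hRT : Rᵀ = R) (hRR : R * R = Y)
    (u : Fin d → ℝ) : 0 ≤ u ⬝ᵥ Y *ᵥ u := by
  rw [factor_dot hRT hRR]
  exact dot_self_nonneg' _

lemma dot_weighted_sum {d N : ℕ} (G : Finset (Fin N)) (p : Fin N → ℝ) (x : Fin N → Fin d → ℝ)
    (c : Fin d → ℝ) :
    (fun k => ∑ j ∈ G, p j * x j k) ⬝ᵥ c = ∑ j ∈ G, p j * (x j ⬝ᵥ c) := by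
  rw [dotProduct]
  calc ∑ i, (∑ j ∈ G, p j * x j i) * c i
      = ∑ i, ∑ j ∈ G, p j * x j i * c i := by
        apply Finset.sum_congr rfl; intro i _; rw [Finset.sum_mul]
    _ = ∑ j ∈ G, ∑ i, p j * x j i * c i := Finset.sum_comm
    _ = ∑ j ∈ G, p j * (x j ⬝ᵥ c) := by
        apply Finset.sum_congr rfl; intro j _
        rw [dotProduct, Finset.mul_sum]
        apply Finset.sum_congr rfl; intro i _; ring

lemma key_lemma {d N : ℕ} (G : Finset (Fin N)) (x : Fin N → Fin d → ℝ) (p : Fin N → ℝ)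
    (Y R : Matrix (Fin d) (Fin d) ℝ) (hRT : Rᵀ = R) (hRR : R * R = Y) (htr : Y.trace = 1)
    (h : Fin d → ℝ) (Q ε : ℝ) (hQ0 : 0 ≤ Q) (hε : 0 < ε)
    (hp0 : ∀ j ∈ G, 0 ≤ p j) (hp1 : ∑ j ∈ G, p j = 1)
    (hQ : ∀ u : Fin d → ℝ, ∑ j ∈ G, p j * (x j ⬝ᵥ u)^2 ≤ Q * (u ⬝ᵥ u)) :
    ∑ j ∈ G, p j * (x j ⬝ᵥ Y *ᵥ x j - 2 * (x j ⬝ᵥ Y *ᵥ h)) ≤ Q + (ε * Q + (h ⬝ᵥ h)/ε) := by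
  set b : Fin d → ℝ := fun k => ∑ j ∈ G, p j * x j k with hb
  -- main quadratic term
  have main : ∑ j ∈ G, p j * (x j ⬝ᵥ Y *ᵥ x j) ≤ Q := by
    have step : ∀ j, x j ⬝ᵥ Y *ᵥ x j = ∑ i, (x j ⬝ᵥ R i)^2 := by
      intro j
      rw [factor_dot hRT hRR, dot_self_sq]
      apply Finset.sum_congr rfl
      intro i _
      rw [mulVec_row, dotProduct_comm]
    calc ∑ j ∈ G, p j * (x j ⬝ᵥ Y *ᵥ x j)
        = ∑ i, ∑ j ∈ G, p j * (x j ⬝ᵥ R i)^2 := by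
          rw [Finset.sum_comm]
          apply Finset.sum_congr rfl
          intro j _
          rw [step, Finset.mul_sum]
      _ ≤ ∑ i, Q * (R i ⬝ᵥ R i) := Finset.sum_le_sum (fun i _ => hQ (R i))
      _ = Q * ∑ i, (R i ⬝ᵥ R i) := by rw [← Finset.mul_sum]
      _ = Q := by rw [trace_rows hRT hRR htr, mul_one]
  -- b ⬝ᵥ b ≤ Q
  have hCS : ∀ u : Fin d → ℝ, (∑ j ∈ G, p j * (x j ⬝ᵥ u))^2 ≤ ∑ j ∈ G, p j * (x j ⬝ᵥ u)^2 := by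
    intro u
    have := Finset.sum_mul_sq_le_sq_mul_sq G (fun j => Real.sqrt (p j))
      (fun j => Real.sqrt (p j) * (x j ⬝ᵥ u))
    have e1 : ∀ j ∈ G, Real.sqrt (p j) * (Real.sqrt (p j) * (x j ⬝ᵥ u)) = p j * (x j ⬝ᵥ u) := by
      intro j hj
      rw [← mul_assoc, Real.mul_self_sqrt (hp0 j hj)]
    have e2 : ∀ j ∈ G, (Real.sqrt (p j))^2 = p j := fun j hj => Real.sq_sqrt (hp0 j hj)
    have e3 : ∀ j ∈ G, (Real.sqrt (p j) * (x j ⬝ᵥ u))^2 = p j * (x j ⬝ᵥ u)^2 := by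
      intro j hj
      rw [mul_pow, Real.sq_sqrt (hp0 j hj)]
    rw [Finset.sum_congr rfl e1, Finset.sum_congr rfl e2, Finset.sum_congr rfl e3, hp1, one_mul] at this
    exact this
  have hbb : b ⬝ᵥ b ≤ Q := by
    have h1 : (b ⬝ᵥ b)^2 ≤ Q * (b ⬝ᵥ b) := by
      calc (b ⬝ᵥ b)^2 = (∑ j ∈ G, p j * (x j ⬝ᵥ b))^2 := by rw [dot_weighted_sum]
        _ ≤ ∑ j ∈ G, p j * (x j ⬝ᵥ b)^2 := hCS b
        _ ≤ Q * (b ⬝ᵥ b) := hQ b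
    nlinarith [dot_self_nonneg' b]
  -- cross term
  have hcross : ∑ j ∈ G, p j * (x j ⬝ᵥ Y *ᵥ h) = b ⬝ᵥ Y *ᵥ h := (dot_weighted_sum G p x _).symm
  have hs2 : (b ⬝ᵥ Y *ᵥ h)^2 ≤ Q * (h ⬝ᵥ h) := by
    have e : b ⬝ᵥ Y *ᵥ h = ∑ i, (R *ᵥ b) i * (R *ᵥ h) i := by
      rw [factor_dot hRT hRR]; rfl
    have cs := Finset.sum_mul_sq_le_sq_mul_sq Finset.univ (R *ᵥ b) (R *ᵥ h)
    have hbYb : (R *ᵥ b) ⬝ᵥ (R *ᵥ b) ≤ Q := by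
      rw [← factor_dot hRT hRR]
      exact le_trans (dot_Y_le hRT hRR htr b) hbb
    have hhYh : (R *ᵥ h) ⬝ᵥ (R *ᵥ h) ≤ h ⬝ᵥ h := by
      rw [← factor_dot hRT hRR]
      exact dot_Y_le hRT hRR htr h
    have h1 : (b ⬝ᵥ Y *ᵥ h)^2 ≤ ((R *ᵥ b) ⬝ᵥ (R *ᵥ b)) * ((R *ᵥ h) ⬝ᵥ (R *ᵥ h)) := by
      rw [e]
      simpa [dot_self_sq, sq] using cs
    have h2 := dot_self_nonneg' (R *ᵥ b)
    have h3 := dot_self_nonneg' (R *ᵥ h)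
    have h4 := dot_self_nonneg' h
    nlinarith
  have hcross2 : -(2 * (b ⬝ᵥ Y *ᵥ h)) ≤ ε * Q + (h ⬝ᵥ h)/ε := by
    have h4 := dot_self_nonneg' h
    set s := b ⬝ᵥ Y *ᵥ h with hsdef
    set t := h ⬝ᵥ h with htdef
    have h5 : ε^2 * s^2 ≤ ε^2 * (Q * t) := by nlinarith [hs2, sq_nonneg ε]
    have h0 : 0 ≤ ε^2*Q + t + 2*ε*s := by
      nlinarith [h5, sq_nonneg (ε^2*Q - t), mul_nonneg (mul_nonneg hε.le hε.le) hQ0, h4]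
    have heq : ε*Q + t/ε + -(2*s) * (-1) = (ε^2*Q + t + 2*ε*s)/ε := by
      field_simp
    have := div_nonneg h0 hε.le
    linarith [heq ▸ this]
  calc ∑ j ∈ G, p j * (x j ⬝ᵥ Y *ᵥ x j - 2 * (x j ⬝ᵥ Y *ᵥ h))
      = ∑ j ∈ G, p j * (x j ⬝ᵥ Y *ᵥ x j) - 2 * ∑ j ∈ G, p j * (x j ⬝ᵥ Y *ᵥ h) := by
        conv_rhs => rw [Finset.mul_sum, ← Finset.sum_sub_distrib]
        apply Finset.sum_congr rfl
        intro j _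
        ring
    _ = ∑ j ∈ G, p j * (x j ⬝ᵥ Y *ᵥ x j) + -(2 * (b ⬝ᵥ Y *ᵥ h)) := by rw [hcross]; ring
    _ ≤ Q + (ε * Q + (h ⬝ᵥ h)/ε) := add_le_add main hcross2


lemma covW_symm {d N : ℕ} (X : Matrix (Fin d) (Fin N) ℝ) (w : Fin N → ℝ) :
    (covW X w)ᵀ = covW X w := by
  unfold covW
  rw [Matrix.transpose_sum]
  apply Finset.sum_congr rfl
  intro i _
  rw [Matrix.transpose_smul]
  congr 1
  ext a b
  simp [Matrix.vecMulVec_apply, mul_comm]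

lemma ymat_symm {d N : ℕ} (X : Matrix (Fin d) (Fin N) ℝ) (ρ : ℝ) (w : Fin N → ℝ) :
    (ymat X ρ w)ᵀ = ymat X ρ w := by
  unfold ymat
  rw [Matrix.transpose_smul, ← Matrix.exp_transpose, Matrix.transpose_smul, covW_symm]

lemma sym_dot {d : ℕ} {Y : Matrix (Fin d) (Fin d) ℝ} (hYT : Yᵀ = Y) (u v : Fin d → ℝ) :
    u ⬝ᵥ Y *ᵥ v = v ⬝ᵥ Y *ᵥ u := by
  rw [Matrix.dotProduct_mulVec, ← Matrix.mulVec_transpose, hYT, dotProduct_comm]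

lemma claimA {d : ℕ} {Y : Matrix (Fin d) (Fin d) ℝ} (hYT : Yᵀ = Y) (a m μs : Fin d → ℝ) :
    (a ⬝ᵥ Y *ᵥ a - 2 * (a ⬝ᵥ Y *ᵥ m)) - μs ⬝ᵥ Y *ᵥ (μs - (2:ℝ) • m)
      = (a - μs) ⬝ᵥ Y *ᵥ (a - μs) - 2 * ((a - μs) ⬝ᵥ Y *ᵥ (m - μs)) := by
  have h1 := sym_dot hYT μs a
  have h2 := sym_dot hYT μs m
  simp only [Matrix.mulVec_sub, dotProduct_sub, sub_dotProduct,
    Matrix.mulVec_smul, dotProduct_smul, smul_eq_mul]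
  linarith

set_option maxHeartbeats 2000000 in
/-- good sample with a small softmax-gradient coordinate. -/
theorem stmt_14 {d N : ℕ} (X : Matrix (Fin d) (Fin N) ℝ) (μs : Fin d → ℝ)
    (G B : Finset (Fin N)) (ε c₁ c₂ c₃ : ℝ)
    (hGB : Disjoint G B) (hUnion : G ∪ B = Finset.univ)
    (hGcard : (G.card : ℝ) = (1 - ε) * N) (hBcard : (B.card : ℝ) = ε * N)
    (hε0 : 0 < ε) (hε1 : ε < 1 / 4)
    (hc₁ : 1 ≤ c₁) (hc₂ : 1 ≤ c₂) (hc₃ : 5 * c₁ ≤ c₃)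
    (hconc : ∀ v ∈ deltaSet N (2 * ε),
      specNorm ((∑ i ∈ G, v i • Matrix.vecMulVec (Xᵀ i - μs) (Xᵀ i - μs)) - 1) ≤
        c₁ * ε * Real.log (1 / ε))
    (w : Fin N → ℝ) (hw : w ∈ deltaSet N (2 * ε))
    (hr : c₂ * ε * Real.sqrt (Real.log (1 / ε)) ≤ vnorm (muW X w - μs)) :
    ∃ j ∈ G, w j < 1 / ((1 - 2 * ε) * N) ∧
      gradSmax X (Real.log d / ε) w j -
          μs ⬝ᵥ (ymat X (Real.log d / ε) w).mulVec (μs - (2 : ℝ) • muW X w) ≤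
        c₃ * vnorm (muW X w - μs) ^ 2 / ε ^ 2 := by
  obtain ⟨hw1, hw2⟩ := hw
  set L : ℝ := Real.log (1/ε) with hLdef
  set r : ℝ := vnorm (muW X w - μs) with hrdef
  set Y : Matrix (Fin d) (Fin d) ℝ := ymat X (Real.log d / ε) w with hYdef
  set δ : ℝ := c₁ * ε * L with hδdef
  -- basic numeric facts
  have hε2 : (0:ℝ) < 1 - 2*ε := by linarith
  have hL1 : 1 < L := by
    rw [hLdef, Real.lt_log_iff_exp_lt (by positivity)]
    have h1 : Real.exp 1 < 2.7182818286 := Real.exp_one_lt_d9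
    have h2 : (4:ℝ) ≤ 1/ε := by
      rw [le_div_iff₀ hε0]; linarith
    linarith
  have hL0 : 0 < L := by linarith
  have hδ0 : 0 ≤ δ := by
    rw [hδdef]; positivity
  have hrpos : 0 < r := by
    refine lt_of_lt_of_le ?_ hr
    have : 0 < Real.sqrt L := Real.sqrt_pos.mpr hL0
    positivity
  have hN : 0 < N := by
    rcases Nat.eq_zero_or_pos N with h | h
    · exfalso; subst h; simp at hw1
    · exact h
  have hd : 0 < d := by
    rcases Nat.eq_zero_or_pos d with h | h
    · exfalso
      subst h
      rw [hrdef] at hrpos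
      simp [vnorm] at hrpos
    · exact h
  have hNR : (0:ℝ) < N := Nat.cast_pos.mpr hN
  have h2εN : (0:ℝ) < (1 - 2*ε) * N := mul_pos hε2 hNR
  set cap : ℝ := 1 / ((1 - 2*ε) * N) with hcapdef
  have hcap : 0 < cap := by rw [hcapdef]; positivity
  have hw0 : ∀ i, 0 ≤ w i := fun i => (hw2 i).1
  have hwle : ∀ i, w i ≤ cap := fun i => (hw2 i).2
  -- sum split
  have hsplit : ∑ i ∈ G, w i + ∑ i ∈ B, w i = 1 := by
    rw [← Finset.sum_union hGB, hUnion]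
    exact hw1
  have hSB0 : 0 ≤ ∑ i ∈ B, w i := Finset.sum_nonneg (fun i _ => hw0 i)
  -- T lower bound
  set T : ℝ := ∑ j ∈ G, (cap - w j) with hTdef
  have hGcap : (G.card : ℝ) * cap = (1-ε)/(1-2*ε) := by
    rw [hGcard, hcapdef]
    field_simp
  have hTsum : T = (G.card : ℝ) * cap - ∑ j ∈ G, w j := by
    rw [hTdef, Finset.sum_sub_distrib, Finset.sum_const, nsmul_eq_mul]
  have hT_lb : ε/(1-2*ε) ≤ T := by
    have he : (1-ε)/(1-2*ε) - 1 = ε/(1-2*ε) := by rw [div_sub_one hε2.ne']; congr 1; ring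
    have hGw : ∑ j ∈ G, w j ≤ 1 := by linarith
    rw [hTsum, hGcap]
    linarith
  have hTpos : 0 < T := lt_of_lt_of_le (by positivity) hT_lb
  -- the averaging weights
  set p : Fin N → ℝ := fun j => (cap - w j)/T with hpdef
  have hp0 : ∀ j ∈ G, 0 ≤ p j := by
    intro j _
    exact div_nonneg (sub_nonneg.mpr (hwle j)) hTpos.le
  have hp1 : ∑ j ∈ G, p j = 1 := by
    rw [hpdef, ← Finset.sum_div, ← hTdef, div_self hTpos.ne']
  -- Y facts
  have hAT : ((Real.log d / ε) • covW X w)ᵀ = (Real.log d / ε) • covW X w := by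
    rw [Matrix.transpose_smul, covW_symm]
  obtain ⟨R, hRT, hRR0, htr0⟩ := sqrt_fact hd ((Real.log d / ε) • covW X w) hAT
  have hRR : R * R = Y := hRR0
  have htr : Y.trace = 1 := htr0
  have hYT : Yᵀ = Y := ymat_symm X (Real.log d / ε) w
  -- quadratic form bounds from concentration
  have QF : ∀ v ∈ deltaSet N (2*ε), ∀ u : Fin d → ℝ,
      |(∑ j ∈ G, v j * ((Xᵀ j - μs) ⬝ᵥ u)^2) - u ⬝ᵥ u| ≤ δ * (u ⬝ᵥ u) := by
    intro v hv u
    have heq := quad_eval G v (fun i => Xᵀ i - μs) u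
    beta_reduce at heq
    rw [← heq]
    have h1 := specNorm_bound ((∑ i ∈ G, v i • Matrix.vecMulVec (Xᵀ i - μs) (Xᵀ i - μs)) - 1) u u
    have h2 := hconc v hv
    have h3 : vnorm u * vnorm u = u ⬝ᵥ u := vnorm_mul_self u
    calc |u ⬝ᵥ ((∑ i ∈ G, v i • Matrix.vecMulVec (Xᵀ i - μs) (Xᵀ i - μs)) - 1) *ᵥ u|
        ≤ specNorm ((∑ i ∈ G, v i • Matrix.vecMulVec (Xᵀ i - μs) (Xᵀ i - μs)) - 1)
            * (vnorm u * vnorm u) := h1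
      _ ≤ δ * (u ⬝ᵥ u) := by
          rw [h3]
          exact mul_le_mul_of_nonneg_right h2 (dot_self_nonneg' u)
  -- the uniform-on-G weights
  have hGpos : (0:ℝ) < (1-ε) * N := by
    have : (0:ℝ) < 1 - ε := by linarith
    positivity
  set v1 : Fin N → ℝ := fun i => if i ∈ G then ((1-ε)*N)⁻¹ else 0 with hv1def
  have hv1mem : v1 ∈ deltaSet N (2*ε) := by
    constructor
    · rw [hv1def]
      rw [Finset.sum_ite_mem, Finset.univ_inter, Finset.sum_const, nsmul_eq_mul, hGcard]
      field_simp
      exact div_self (by linarith)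
    · intro i
      constructor
      · rw [hv1def]
        dsimp only
        split
        · positivity
        · exact le_rfl
      · rw [hv1def]
        dsimp only
        split
        · rw [one_div]
          apply inv_anti₀ h2εN
          apply mul_le_mul_of_nonneg_right (by linarith) hNR.le
        · positivity
  -- the key quadratic bound for p
  set Q : ℝ := 1 + 2*c₁*L with hQdef
  have hQ0 : 0 ≤ Q := by rw [hQdef]; positivity
  have hQ : ∀ u : Fin d → ℝ, ∑ j ∈ G, p j * ((Xᵀ j - μs) ⬝ᵥ u)^2 ≤ Q * (u ⬝ᵥ u) := by
    intro u
    have hUU : 0 ≤ u ⬝ᵥ u := dot_self_nonneg' u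
    have hw' := QF w ⟨hw1, hw2⟩ u
    have hv1' := QF v1 hv1mem u
    rw [abs_le] at hw' hv1'
    have hSW : (1-δ) * (u ⬝ᵥ u) ≤ ∑ j ∈ G, w j * ((Xᵀ j - μs) ⬝ᵥ u)^2 := by
      linarith only [hw'.1]
    have hv1sum : ∑ j ∈ G, v1 j * ((Xᵀ j - μs) ⬝ᵥ u)^2
        = ((1-ε)*N)⁻¹ * ∑ j ∈ G, ((Xᵀ j - μs) ⬝ᵥ u)^2 := by
      rw [Finset.mul_sum]
      apply Finset.sum_congr rfl
      intro j hj
      rw [hv1def]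
      simp [hj]
    have hS1 : ∑ j ∈ G, ((Xᵀ j - μs) ⬝ᵥ u)^2 ≤ ((1-ε)*N) * ((1+δ) * (u ⬝ᵥ u)) := by
      have h4 : ((1-ε)*N)⁻¹ * ∑ j ∈ G, ((Xᵀ j - μs) ⬝ᵥ u)^2 ≤ (1+δ) * (u ⬝ᵥ u) := by
        rw [← hv1sum]; linarith [hv1'.2]
      calc ∑ j ∈ G, ((Xᵀ j - μs) ⬝ᵥ u)^2
          = ((1-ε)*N) * (((1-ε)*N)⁻¹ * ∑ j ∈ G, ((Xᵀ j - μs) ⬝ᵥ u)^2) := by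
            rw [← mul_assoc, mul_inv_cancel₀ hGpos.ne', one_mul]
        _ ≤ ((1-ε)*N) * ((1+δ) * (u ⬝ᵥ u)) := by
            exact mul_le_mul_of_nonneg_left h4 hGpos.le
    have hsum_eq : ∑ j ∈ G, p j * ((Xᵀ j - μs) ⬝ᵥ u)^2
        = (∑ j ∈ G, (cap - w j) * ((Xᵀ j - μs) ⬝ᵥ u)^2) / T := by
      rw [Finset.sum_div]
      apply Finset.sum_congr rfl
      intro j _
      rw [hpdef]
      ring
    have hsub : ∑ j ∈ G, (cap - w j) * ((Xᵀ j - μs) ⬝ᵥ u)^2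
        = cap * ∑ j ∈ G, ((Xᵀ j - μs) ⬝ᵥ u)^2 - ∑ j ∈ G, w j * ((Xᵀ j - μs) ⬝ᵥ u)^2 := by
      rw [Finset.mul_sum, ← Finset.sum_sub_distrib]
      apply Finset.sum_congr rfl
      intro j _
      ring
    have hcapN : cap * ((1-ε)*N) = (1-ε)/(1-2*ε) := by
      rw [hcapdef]
      field_simp
    have hnum : (1-ε)/(1-2*ε)*(1+δ) - (1-δ) ≤ Q * T := by
      have hstep : (1-ε)/(1-2*ε)*(1+δ) - (1-δ) ≤ Q * (ε/(1-2*ε)) := by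
        rw [← sub_nonneg]
        have hexp : Q * (ε/(1-2*ε)) - ((1-ε)/(1-2*ε)*(1+δ) - (1-δ)) = (3*ε*δ)/(1-2*ε) := by
          rw [hQdef, hδdef]
          field_simp
          ring
        rw [hexp]
        positivity
      have hstep2 : Q * (ε/(1-2*ε)) ≤ Q * T := mul_le_mul_of_nonneg_left hT_lb hQ0
      linarith
    have hmain : ∑ j ∈ G, (cap - w j) * ((Xᵀ j - μs) ⬝ᵥ u)^2 ≤ Q * T * (u ⬝ᵥ u) := by
      calc ∑ j ∈ G, (cap - w j) * ((Xᵀ j - μs) ⬝ᵥ u)^2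
          = cap * ∑ j ∈ G, ((Xᵀ j - μs) ⬝ᵥ u)^2 - ∑ j ∈ G, w j * ((Xᵀ j - μs) ⬝ᵥ u)^2 := hsub
        _ ≤ cap * (((1-ε)*N) * ((1+δ) * (u ⬝ᵥ u))) - (1-δ) * (u ⬝ᵥ u) := by
            have := mul_le_mul_of_nonneg_left hS1 hcap.le
            linarith
        _ = ((1-ε)/(1-2*ε)*(1+δ) - (1-δ)) * (u ⬝ᵥ u) := by
            rw [← mul_assoc, hcapN]
            ring
        _ ≤ Q * T * (u ⬝ᵥ u) := mul_le_mul_of_nonneg_right hnum hUU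
    rw [hsum_eq, div_le_iff₀ hTpos]
    calc ∑ j ∈ G, (cap - w j) * ((Xᵀ j - μs) ⬝ᵥ u)^2 ≤ Q * T * (u ⬝ᵥ u) := hmain
      _ = Q * (u ⬝ᵥ u) * T := by ring
  -- apply the key lemma
  have hkey := key_lemma G (fun j => Xᵀ j - μs) p Y R hRT hRR htr (muW X w - μs) Q ε hQ0 hε0
    hp0 hp1 hQ
  beta_reduce at hkey
  have hhr : (muW X w - μs) ⬝ᵥ (muW X w - μs) = r^2 := by
    rw [hrdef, sq, vnorm_mul_self]
  rw [hhr] at hkey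
  -- final numeric bound
  have hP : L ≤ r^2/ε^2 := by
    have h1 : (c₂*ε*Real.sqrt L)^2 ≤ r^2 := by
      have := pow_le_pow_left₀ (by positivity) hr 2
      simpa using this
    have h2 : (c₂*ε*Real.sqrt L)^2 = c₂^2*ε^2*L := by
      rw [mul_pow, mul_pow, Real.sq_sqrt hL0.le]
    rw [le_div_iff₀ (by positivity)]
    have hc22 : 1 ≤ c₂^2 := by nlinarith [hc₂]
    have h3 : 0 ≤ (c₂^2 - 1) * (ε^2 * L) :=
      mul_nonneg (by linarith) (mul_nonneg (sq_nonneg ε) hL0.le)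
    linarith only [h1, h2, h3]
  have hfinal : Q + (ε*Q + r^2/ε) ≤ 4*c₁*(r^2/ε^2) := by
    have hre : r^2/ε = (r^2/ε^2)*ε := by field_simp
    set P : ℝ := r^2/ε^2 with hPdef
    have hP1 : 1 ≤ P := le_trans hL1.le hP
    have hP0 : (0:ℝ) ≤ P := by linarith only [hP1]
    have h2 : ε*P ≤ (1/4)*P := mul_le_mul_of_nonneg_right hε1.le hP0
    have h3 : (2*c₁)*L ≤ (2*c₁)*P := mul_le_mul_of_nonneg_left hP (by linarith only [hc₁])
    have h4 : ε*((2*c₁)*L) ≤ (1/4)*((2*c₁)*P) :=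
      mul_le_mul hε1.le h3 (mul_nonneg (by linarith only [hc₁]) hL0.le) (by norm_num)
    have h5 : P ≤ c₁*P := le_mul_of_one_le_left hP0 hc₁
    have h6 : (1:ℝ) ≤ c₁*P := le_trans hP1 h5
    rw [hQdef, hre]
    linarith only [h2, h3, h4, h5, h6, hε1, hP1, hε0]
  -- contradiction argument
  by_contra hcon
  push_neg at hcon
  have hexpr : ∀ j : Fin N, gradSmax X (Real.log d / ε) w j -
      μs ⬝ᵥ Y *ᵥ (μs - (2:ℝ) • muW X w)
      = (Xᵀ j - μs) ⬝ᵥ Y *ᵥ (Xᵀ j - μs) - 2*((Xᵀ j - μs) ⬝ᵥ Y *ᵥ (muW X w - μs)) := by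
    intro j
    have hA := claimA hYT (Xᵀ j) (muW X w) μs
    rw [← hA]
    simp only [gradSmax]
    rfl
  have hlower : c₃ * (r^2/ε^2) ≤ ∑ j ∈ G, p j *
      ((Xᵀ j - μs) ⬝ᵥ Y *ᵥ (Xᵀ j - μs) - 2*((Xᵀ j - μs) ⬝ᵥ Y *ᵥ (muW X w - μs))) := by
    calc c₃ * (r^2/ε^2) = ∑ j ∈ G, p j * (c₃ * (r^2/ε^2)) := by
          rw [← Finset.sum_mul, hp1, one_mul]
      _ ≤ _ := by
          apply Finset.sum_le_sum
          intro j hj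
          rcases lt_or_ge (w j) cap with hlt | hge
          · have hc := hcon j hj hlt
            rw [hexpr j] at hc
            have : c₃ * (r^2/ε^2) ≤ (Xᵀ j - μs) ⬝ᵥ Y *ᵥ (Xᵀ j - μs)
                - 2*((Xᵀ j - μs) ⬝ᵥ Y *ᵥ (muW X w - μs)) := by
              have : c₃ * r ^ 2 / ε ^ 2 = c₃ * (r^2/ε^2) := by ring
              linarith [hc, this]
            exact mul_le_mul_of_nonneg_left this (hp0 j hj)
          · have hwj : w j = cap := le_antisymm (hwle j) hge
            have : p j = 0 := by rw [hpdef]; simp [hwj]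
            rw [this]
            simp
  have hPpos : 0 < r^2/ε^2 := by positivity
  have h4c : 4*c₁*(r^2/ε^2) < c₃*(r^2/ε^2) :=
    mul_lt_mul_of_pos_right (by linarith only [hc₃, hc₁]) hPpos
  linarith only [hlower, hkey, hfinal, h4c]
end
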